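/- For any X, Y ⊆ ω₁\{0}, the family B(X,Y) of all order-isomorphisms f : D → R, where D is a proper initial segment of I_X such that I_X \ D has no least element and R is a proper initial segment of I_Y such that I_Y \ R has no least element, is an ℵ₁-back-and-forth system: B(X,Y) is nonempty and for every f ∈ B(X,Y) and every countable A ⊆ I_X (resp. A ⊆ I_Y) there is g ∈ B(X,Y) extending f with A ⊆ dom(g) (resp. A ⊆ range(g)). -/

import Mathlib

open Cardinal Set

noncomputable def omega1 : Ordinal := (Cardinal.aleph 1).ord

/-- The linear order `I_Z = Σ_{i<ω₁} J_i^Z`, where `J_i^Z = ℚ` if `i ∉ Z` and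
`J_i^Z = ℚ ∩ [0,∞)` if `i ∈ Z`. -/
def ConwayOrder (Z : Set Ordinal) : Type _ :=
  {p : Ordinal ×ₗ ℚ // (ofLex p).1 < omega1 ∧ ((ofLex p).1 ∈ Z → 0 ≤ (ofLex p).2)}

noncomputable instance (Z : Set Ordinal) : LinearOrder (ConwayOrder Z) :=
  inferInstanceAs (LinearOrder {p : Ordinal ×ₗ ℚ //
    (ofLex p).1 < omega1 ∧ ((ofLex p).1 ∈ Z → 0 ≤ (ofLex p).2)})

/-- `G` is the graph of a partial order-isomorphism between linear orders. -/
def IsOrdIso {A B : Type*} [LinearOrder A] [LinearOrder B] (G : Set (A × B)) : Prop :=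
  ∀ p ∈ G, ∀ q ∈ G, ((p : A × B).1 < q.1 ↔ p.2 < q.2) ∧ (p.1 = q.1 ↔ p.2 = q.2)

/-- Silver's family `B(X,Y)`: graphs of order-isomorphisms between a proper initial segment
`D` of `I_X` whose complement has no least element and a proper initial segment `R` of `I_Y`
whose complement has no least element. -/
def SilverFamily (X Y : Set Ordinal) : Set (Set (ConwayOrder X × ConwayOrder Y)) :=
  {G | IsOrdIso G ∧
    (IsLowerSet (Prod.fst '' G) ∧ Prod.fst '' G ≠ Set.univ ∧
      ¬ ∃ m ∈ (Prod.fst '' G)ᶜ, ∀ x ∈ (Prod.fst '' G)ᶜ, m ≤ x) ∧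
    (IsLowerSet (Prod.snd '' G) ∧ Prod.snd '' G ≠ Set.univ ∧
      ¬ ∃ m ∈ (Prod.snd '' G)ᶜ, ∀ x ∈ (Prod.snd '' G)ᶜ, m ≤ x)}

namespace SilverAux

variable {Z : Set Ordinal}

def idx (p : ConwayOrder Z) : Ordinal := (ofLex p.val).1
def rat (p : ConwayOrder Z) : ℚ := (ofLex p.val).2

lemma idx_lt (p : ConwayOrder Z) : idx p < omega1 := p.property.1
lemma rat_nonneg (p : ConwayOrder Z) (h : idx p ∈ Z) : 0 ≤ rat p := p.property.2 h

def mk' (i : Ordinal) (q : ℚ) (h1 : i < omega1) (h2 : i ∈ Z → 0 ≤ q) : ConwayOrder Z :=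
  ⟨toLex (i, q), h1, h2⟩

@[simp] lemma idx_mk' {i q h1 h2} : idx (mk' (Z := Z) i q h1 h2) = i := rfl
@[simp] lemma rat_mk' {i q h1 h2} : rat (mk' (Z := Z) i q h1 h2) = q := rfl

lemma lt_def (p q : ConwayOrder Z) :
    p < q ↔ idx p < idx q ∨ (idx p = idx q ∧ rat p < rat q) := by
  change p.val < q.val ↔ _
  exact Prod.Lex.lt_iff (x := p.val) (y := q.val)

lemma le_def (p q : ConwayOrder Z) :
    p ≤ q ↔ idx p < idx q ∨ (idx p = idx q ∧ rat p ≤ rat q) := by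
  change p.val ≤ q.val ↔ _
  exact Prod.Lex.le_iff (x := p.val) (y := q.val)

lemma ext' {p q : ConwayOrder Z} (h1 : idx p = idx q) (h2 : rat p = rat q) : p = q := by
  apply Subtype.ext
  exact Prod.ext h1 h2

lemma zero_lt_omega1 : (0 : Ordinal) < omega1 :=
  Cardinal.lt_ord.2 (by simpa using aleph0_lt_aleph_one.trans_le' aleph0_pos.le)

lemma omega1_isLimit : Order.IsSuccLimit omega1 := Cardinal.isSuccLimit_ord (aleph0_le_aleph 1)

lemma succ_lt_omega1 {a : Ordinal} (h : a < omega1) : a + 1 < omega1 := by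
  rw [Ordinal.add_one_eq_succ]
  exact omega1_isLimit.succ_lt h

/-- density of the ambient order -/
lemma exists_between' {p q : ConwayOrder Z} (h : p < q) : ∃ r, p < r ∧ r < q := by
  rcases (lt_def p q).1 h with h' | ⟨h1, h2⟩
  · refine ⟨mk' (idx p) (rat p + 1) (idx_lt p) (fun hz => ?_), ?_, ?_⟩
    · have := rat_nonneg p hz; linarith
    · rw [lt_def]; right; exact ⟨rfl, by simp⟩
    · rw [lt_def]; left; simpa using h'
  · obtain ⟨m, hm1, hm2⟩ := exists_between h2
    refine ⟨mk' (idx p) m (idx_lt p) (fun hz => ?_), ?_, ?_⟩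
    · have := rat_nonneg p hz; linarith
    · rw [lt_def]; right; exact ⟨rfl, by simpa using hm1⟩
    · rw [lt_def]; right; exact ⟨h1, by simpa using hm2⟩

lemma countable_bounded (γ : Ordinal) (hγ : γ < omega1) :
    {p : ConwayOrder Z | idx p ≤ γ}.Countable := by
  have hγ1 : γ < γ + 1 := by
    rw [Ordinal.add_one_eq_succ]; exact Order.lt_succ γ
  have hcnt : Countable (Set.Iic γ : Set Ordinal) := by
    rw [← Cardinal.mk_le_aleph0_iff]
    have h1 : (Set.Iic γ : Set Ordinal) ⊆ Set.Iio (γ + 1) := fun x hx => lt_of_le_of_lt hx hγ1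
    have h2 := Ordinal.mk_Iio_ordinal (γ + 1)
    have h3 : (γ + 1).card ≤ ℵ₀ := by
      rw [← Order.lt_succ_iff, Cardinal.succ_aleph0, ← Cardinal.lt_ord]
      exact succ_lt_omega1 hγ
    calc #(Set.Iic γ : Set Ordinal) ≤ #(Set.Iio (γ + 1) : Set Ordinal) :=
          Cardinal.mk_le_mk_of_subset h1
      _ ≤ ℵ₀ := by rw [h2]; exact Cardinal.lift_le_aleph0.2 h3
  rw [← Set.countable_coe_iff]
  have : Countable (↥(Set.Iic γ) × ℚ) := inferInstance
  have hinj : Function.Injective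
      (fun p : {p : ConwayOrder Z | idx p ≤ γ} =>
        ((⟨idx p.val, p.property⟩, rat p.val) : ↥(Set.Iic γ) × ℚ)) := by
    intro p q h
    simp only [Prod.mk.injEq, Subtype.mk.injEq] at h
    exact Subtype.ext (ext' (congrArg Subtype.val h.1) h.2)
  exact hinj.countable


noncomputable def sq2 : ℝ := Real.sqrt 2

lemma sq2_pos : (0:ℝ) < sq2 := Real.sqrt_pos.mpr (by norm_num)

lemma sq2_lt_two : sq2 < 2 := by
  rw [sq2, Real.sqrt_lt' (by norm_num : (0:ℝ) < 2)]; norm_num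

lemma sq2_irr : Irrational sq2 := irrational_sqrt_two

/-- the cut: everything in blocks `< γ` together with the part of block `γ` below `√2`. -/
def Cut (Z : Set Ordinal) (γ : Ordinal) : Set (ConwayOrder Z) :=
  {p | idx p < γ ∨ (idx p = γ ∧ (rat p : ℝ) < sq2)}

lemma cut_lowerSet (γ : Ordinal) : IsLowerSet (Cut Z γ) := by
  intro q p hpq hq
  rcases (le_def p q).1 hpq with h | ⟨h1, h2⟩
  · rcases hq with h' | ⟨h', _⟩
    · exact Or.inl (h.trans h')
    · exact Or.inl (h' ▸ h)
  · rcases hq with h' | ⟨h', h2'⟩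
    · exact Or.inl (h1 ▸ h')
    · exact Or.inr ⟨h1.trans h', lt_of_le_of_lt (by exact_mod_cast h2) h2'⟩

lemma not_mem_cut_iff {γ : Ordinal} {p : ConwayOrder Z} :
    p ∉ Cut Z γ ↔ γ < idx p ∨ (idx p = γ ∧ sq2 < (rat p : ℝ)) := by
  unfold Cut
  simp only [Set.mem_setOf_eq, not_or, not_lt, not_and]
  constructor
  · rintro ⟨h1, h2⟩
    rcases h1.lt_or_eq with h | h
    · exact Or.inl h
    · refine Or.inr ⟨h.symm, lt_of_le_of_ne (h2 h.symm) (sq2_irr.ne_rat _)⟩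
  · rintro (h | ⟨h1, h2⟩)
    · exact ⟨h.le, fun he => absurd he.le h.not_ge⟩
    · exact ⟨h1.ge, fun _ => h2.le⟩

lemma mk'_two_not_mem_cut (γ : Ordinal) (hγ : γ < omega1) :
    mk' (Z := Z) γ 2 hγ (fun _ => by norm_num) ∉ Cut Z γ :=
  not_mem_cut_iff.2 (Or.inr ⟨rfl, by push_cast; exact sq2_lt_two⟩)

lemma cut_ne_univ (γ : Ordinal) (hγ : γ < omega1) : Cut Z γ ≠ Set.univ :=
  (Set.ne_univ_iff_exists_notMem _).2 ⟨_, mk'_two_not_mem_cut γ hγ⟩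

lemma cut_compl_no_least (γ : Ordinal) (hγ : γ < omega1) :
    ¬ ∃ m ∈ (Cut Z γ)ᶜ, ∀ x ∈ (Cut Z γ)ᶜ, m ≤ x := by
  rintro ⟨m, hm, hmin⟩
  rcases not_mem_cut_iff.1 hm with h | ⟨h1, h2⟩
  · have hx := mk'_two_not_mem_cut (Z := Z) γ hγ
    have := hmin _ hx
    rw [le_def] at this
    rcases this with h' | ⟨h', _⟩
    · simp only [idx_mk'] at h'; exact absurd h' h.asymm
    · simp only [idx_mk'] at h'; exact absurd h' h.ne'
  · obtain ⟨r, hr1, hr2⟩ := exists_rat_btwn h2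
    have hr0 : (0:ℚ) ≤ r := by
      have : (0:ℝ) < r := sq2_pos.trans hr1
      exact_mod_cast this.le
    have hx : mk' (Z := Z) γ r hγ (fun _ => hr0) ∉ Cut Z γ :=
      not_mem_cut_iff.2 (Or.inr ⟨rfl, hr1⟩)
    have := hmin _ hx
    rw [le_def] at this
    rcases this with h' | ⟨_, h'⟩
    · simp only [idx_mk'] at h'; exact absurd h' (h1 ▸ lt_irrefl γ)
    · simp only [rat_mk'] at h'
      have hrm : r < rat m := by exact_mod_cast hr2
      exact absurd h' hrm.not_ge

lemma cut_countable (γ : Ordinal) (hγ : γ < omega1) : (Cut Z γ).Countable := by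
  refine (countable_bounded γ hγ).mono ?_
  rintro p (h | ⟨h, _⟩)
  · exact h.le
  · exact h.le


lemma sep_of_lowerSet {D : Set (ConwayOrder Z)} (hDlow : IsLowerSet D)
    {d t : ConwayOrder Z} (hd : d ∈ D) (ht : t ∉ D) : d < t :=
  not_le.1 fun h => ht (hDlow h hd)

lemma iso_rat {D : Set (ConwayOrder Z)} {γ : Ordinal} (hγ : γ < omega1)
    (hDlow : IsLowerSet D) (hDno : ¬ ∃ m ∈ Dᶜ, ∀ x ∈ Dᶜ, m ≤ x)
    (hDγ : ∀ d ∈ D, idx d < γ) : Nonempty (↥(Cut Z γ \ D) ≃o ℚ) := by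
  set T := Cut Z γ \ D with hT
  have h0T : mk' γ 0 hγ (fun _ => le_refl 0) ∈ T :=
    ⟨Or.inr ⟨rfl, by simpa using sq2_pos⟩,
     fun hD => absurd (hDγ _ hD) (by simp)⟩
  haveI : Nonempty ↥T := ⟨⟨_, h0T⟩⟩
  haveI : Countable ↥T := ((cut_countable γ hγ).mono Set.diff_subset).to_subtype
  haveI : NoMaxOrder ↥T := by
    constructor
    rintro ⟨x, hxC, hxD⟩
    rcases hxC with h | ⟨h1, h2⟩
    · exact ⟨⟨_, h0T⟩, Subtype.mk_lt_mk.2 ((lt_def _ _).2 (Or.inl (by simpa using h)))⟩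
    · obtain ⟨r, hr1, hr2⟩ := exists_rat_btwn h2
      have hxr : rat x < r := by exact_mod_cast hr1
      have hr0 : Z.Mem γ → (0:ℚ) ≤ r := fun hz => le_trans (x.property.2 (show idx x ∈ Z from h1.symm ▸ hz)) hxr.le
      refine ⟨⟨mk' γ r hγ hr0, ⟨Or.inr ⟨rfl, hr2⟩, fun hD => absurd (hDγ _ hD) (by simp)⟩⟩, ?_⟩
      exact Subtype.mk_lt_mk.2 ((lt_def _ _).2 (Or.inr ⟨by simpa using h1, by simpa using hxr⟩))
  haveI : NoMinOrder ↥T := by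
    constructor
    push_neg at hDno
    rintro ⟨x, hxC, hxD⟩
    obtain ⟨z, hz, hzx⟩ := hDno x hxD
    exact ⟨⟨z, ⟨cut_lowerSet γ hzx.le hxC, hz⟩⟩, Subtype.mk_lt_mk.2 hzx⟩
  haveI : DenselyOrdered ↥T := by
    constructor
    rintro ⟨x, hxC, hxD⟩ ⟨z, hzC, hzD⟩ hxz
    obtain ⟨y, h1, h2⟩ := exists_between' (Subtype.mk_lt_mk.1 hxz)
    exact ⟨⟨y, ⟨cut_lowerSet γ h2.le hzC, fun hy => hxD (hDlow h1.le hy)⟩⟩,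
      Subtype.mk_lt_mk.2 h1, Subtype.mk_lt_mk.2 h2⟩
  exact Order.iso_of_countable_dense ↥T ℚ


lemma extend (X Y : Set Ordinal) :
    ∀ G ∈ SilverFamily X Y, ∀ A : Set (ConwayOrder X), A.Countable →
      ∃ G' ∈ SilverFamily X Y, G ⊆ G' ∧ A ⊆ Prod.fst '' G' := by
  rintro G ⟨hG, ⟨hDlow, hDne, hDno⟩, hRlow, hRne, hRno⟩ A hA
  obtain ⟨c, hc⟩ := (Set.ne_univ_iff_exists_notMem _).1 hDne
  obtain ⟨c', hc'⟩ := (Set.ne_univ_iff_exists_notMem _).1 hRne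
  -- an enumeration bound for the indices of `A`
  obtain ⟨f, hfA, hflt⟩ : ∃ f : ℕ → Ordinal,
      (∀ a ∈ A, ∃ n, idx a = f n) ∧ ∀ n, f n < omega1 := by
    rcases A.eq_empty_or_nonempty with h | h
    · exact ⟨fun _ => 0, fun a ha => absurd ha (h ▸ Set.notMem_empty a),
        fun _ => zero_lt_omega1⟩
    · obtain ⟨g, hg⟩ := Set.Countable.exists_eq_range hA h
      exact ⟨fun n => idx (g n), fun a ha => by
          obtain ⟨n, rfl⟩ := hg ▸ ha; exact ⟨n, rfl⟩,
        fun n => idx_lt (g n)⟩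
  have hsup : (⨆ n, f n) < omega1 :=
    Cardinal.iSup_lt_ord_lift_of_isRegular Cardinal.isRegular_aleph_one
      (by simpa using aleph0_lt_aleph_one) hflt
  set βX := max (idx c) (⨆ n, f n) with hβX
  have hβXlt : βX < omega1 := max_lt (idx_lt c) hsup
  set γ := βX + 1 with hγdef
  have hγ : γ < omega1 := succ_lt_omega1 hβXlt
  have hβγ : βX < γ := by rw [hγdef, Ordinal.add_one_eq_succ]; exact Order.lt_succ βX
  have hγc : idx c < γ := lt_of_le_of_lt (le_max_left _ _) hβγ
  set δ := idx c' + 1 with hδdef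
  have hδ : δ < omega1 := succ_lt_omega1 (idx_lt c')
  have hγc' : idx c' < δ := by
    rw [hδdef, Ordinal.add_one_eq_succ]; exact Order.lt_succ _
  have hγA : ∀ a ∈ A, idx a < γ := by
    intro a ha
    obtain ⟨n, hn⟩ := hfA a ha
    exact lt_of_le_of_lt ((hn ▸ Ordinal.le_iSup f n).trans (le_max_right _ _)) hβγ
  set D := Prod.fst '' G with hD
  set R := Prod.snd '' G with hR
  have hDγ : ∀ d ∈ D, idx d < γ := by
    intro d hd
    rcases (lt_def d c).1 (sep_of_lowerSet hDlow hd hc) with h' | ⟨h', _⟩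
    · exact h'.trans hγc
    · exact h' ▸ hγc
  have hRγ : ∀ d ∈ R, idx d < δ := by
    intro d hd
    rcases (lt_def d c').1 (sep_of_lowerSet hRlow hd hc') with h' | ⟨h', _⟩
    · exact h'.trans hγc'
    · exact h' ▸ hγc'
  obtain ⟨eX⟩ := iso_rat hγ hDlow hDno hDγ
  obtain ⟨eY⟩ := iso_rat hδ hRlow hRno hRγ
  set e : ↥(Cut X γ \ D) ≃o ↥(Cut Y δ \ R) := eX.trans eY.symm with he
  set F : ↥(Cut X γ \ D) → ConwayOrder X × ConwayOrder Y :=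
    fun t => (t.val, (e t).val) with hF
  have himg1 : Prod.fst '' (G ∪ Set.range F) = Cut X γ := by
    have h1 : Prod.fst '' Set.range F = Cut X γ \ D := by
      rw [← Set.range_comp]
      exact Subtype.range_coe
    rw [Set.image_union, h1]
    exact Set.union_diff_cancel (fun d hd => Or.inl (hDγ d hd))
  have himg2 : Prod.snd '' (G ∪ Set.range F) = Cut Y δ := by
    have h2 : Prod.snd '' Set.range F = Cut Y δ \ R := by
      rw [← Set.range_comp]
      have hcomp : Prod.snd ∘ F = Subtype.val ∘ e := rfl
      rw [hcomp, e.surjective.range_comp]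
      exact Subtype.range_coe
    rw [Set.image_union, h2]
    exact Set.union_diff_cancel (fun d hd => Or.inl (hRγ d hd))
  have hmemD : ∀ p ∈ G, (p : ConwayOrder X × ConwayOrder Y).1 ∈ D := fun p hp => ⟨p, hp, rfl⟩
  have hmemR : ∀ p ∈ G, (p : ConwayOrder X × ConwayOrder Y).2 ∈ R := fun p hp => ⟨p, hp, rfl⟩
  refine ⟨G ∪ Set.range F, ⟨?_, ?_, ?_⟩, Set.subset_union_left, ?_⟩
  · -- IsOrdIso
    rintro p (hp | ⟨t, rfl⟩) q (hq | ⟨s, rfl⟩)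
    · exact hG p hp q hq
    · have h1 : p.1 < s.val := sep_of_lowerSet hDlow (hmemD p hp) s.property.2
      have h2 : p.2 < (e s).val := sep_of_lowerSet hRlow (hmemR p hp) (e s).property.2
      exact ⟨iff_of_true h1 h2, iff_of_false h1.ne h2.ne⟩
    · have h1 : q.1 < t.val := sep_of_lowerSet hDlow (hmemD q hq) t.property.2
      have h2 : q.2 < (e t).val := sep_of_lowerSet hRlow (hmemR q hq) (e t).property.2
      exact ⟨iff_of_false h1.asymm h2.asymm, iff_of_false h1.ne' h2.ne'⟩
    · exact ⟨Iff.trans Subtype.coe_lt_coe ((e.lt_iff_lt (x := t) (y := s)).symm.trans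
          Subtype.coe_lt_coe.symm),
        Iff.trans Subtype.coe_inj ((e.toEquiv.apply_eq_iff_eq (x := t) (y := s)).symm.trans
          Subtype.coe_inj.symm)⟩
  · rw [himg1]
    exact ⟨cut_lowerSet γ, cut_ne_univ γ hγ, cut_compl_no_least γ hγ⟩
  · rw [himg2]
    exact ⟨cut_lowerSet δ, cut_ne_univ δ hδ, cut_compl_no_least δ hδ⟩
  · intro a ha
    rw [himg1]
    exact Or.inl (hγA a ha)


lemma swap_mem {X Y : Set Ordinal} {G : Set (ConwayOrder X × ConwayOrder Y)}
    (hG : G ∈ SilverFamily X Y) : Prod.swap '' G ∈ SilverFamily Y X := by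
  obtain ⟨h1, h2, h3⟩ := hG
  have himg1 : Prod.fst '' (Prod.swap '' G) = Prod.snd '' G := by
    rw [Set.image_image]; rfl
  have himg2 : Prod.snd '' (Prod.swap '' G) = Prod.fst '' G := by
    rw [Set.image_image]; rfl
  refine ⟨?_, by rw [himg1]; exact h3, by rw [himg2]; exact h2⟩
  rintro p ⟨p₀, hp₀, rfl⟩ q ⟨q₀, hq₀, rfl⟩
  obtain ⟨ha, hb⟩ := h1 p₀ hp₀ q₀ hq₀
  exact ⟨ha.symm, hb.symm⟩

lemma no_least_compl_empty {Z : Set Ordinal} (hZ0 : (0:Ordinal) ∉ Z) :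
    IsLowerSet (∅ : Set (ConwayOrder Z)) ∧ (∅ : Set (ConwayOrder Z)) ≠ Set.univ ∧
      ¬ ∃ m ∈ (∅ : Set (ConwayOrder Z))ᶜ, ∀ x ∈ (∅ : Set (ConwayOrder Z))ᶜ, m ≤ x := by
  refine ⟨fun _ _ _ h => h, ?_, ?_⟩
  · intro h
    exact (h ▸ Set.mem_univ (mk' (Z := Z) 0 0 zero_lt_omega1 (fun h0 => absurd h0 hZ0)) :
      mk' (Z := Z) 0 0 zero_lt_omega1 (fun h0 => absurd h0 hZ0) ∈ (∅ : Set (ConwayOrder Z)))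
  · rintro ⟨m, -, hmin⟩
    set x := mk' (Z := Z) 0 (rat m - 1) zero_lt_omega1 (fun h0 => absurd h0 hZ0) with hx
    have hxm : x < m := by
      rw [lt_def]
      rcases eq_zero_or_pos (idx m) with h | h
      · right
        refine ⟨by simpa [hx] using h.symm, ?_⟩
        simp only [hx, rat_mk']
        linarith
      · left
        simpa [hx] using h
    exact absurd (hmin x (Set.notMem_empty x)) hxm.not_ge

lemma empty_mem (X Y : Set Ordinal) (hX : X ⊆ Set.Iio omega1 \ {0})
    (hY : Y ⊆ Set.Iio omega1 \ {0}) :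
    (∅ : Set (ConwayOrder X × ConwayOrder Y)) ∈ SilverFamily X Y := by
  have hX0 : (0:Ordinal) ∉ X := fun h => (hX h).2 rfl
  have hY0 : (0:Ordinal) ∉ Y := fun h => (hY h).2 rfl
  refine ⟨fun p hp => absurd hp (Set.notMem_empty p), ?_, ?_⟩
  · rw [Set.image_empty]; exact no_least_compl_empty hX0
  · rw [Set.image_empty]; exact no_least_compl_empty hY0

end SilverAux

/-- `B(X,Y)` is an `ℵ₁`-back-and-forth system: it is nonempty, and any member extends to a
member absorbing any prescribed countable subset on either side.  (This witnesses that `I_X`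
and `I_Y` are `L_{∞,ℵ₁}`-equivalent.) -/
theorem silverFamily_is_aleph1_back_and_forth (X Y : Set Ordinal)
    (hX : X ⊆ Set.Iio omega1 \ {0}) (hY : Y ⊆ Set.Iio omega1 \ {0}) :
    (SilverFamily X Y).Nonempty ∧
    (∀ G ∈ SilverFamily X Y, ∀ A : Set (ConwayOrder X), A.Countable →
      ∃ G' ∈ SilverFamily X Y, G ⊆ G' ∧ A ⊆ Prod.fst '' G') ∧
    (∀ G ∈ SilverFamily X Y, ∀ A : Set (ConwayOrder Y), A.Countable →
      ∃ G' ∈ SilverFamily X Y, G ⊆ G' ∧ A ⊆ Prod.snd '' G') := by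
  refine ⟨⟨∅, SilverAux.empty_mem X Y hX hY⟩, SilverAux.extend X Y, ?_⟩
  intro G hG A hA
  obtain ⟨G'', hG'', hsub, hA'⟩ :=
    SilverAux.extend Y X (Prod.swap '' G) (SilverAux.swap_mem hG) A hA
  refine ⟨Prod.swap '' G'', SilverAux.swap_mem hG'', ?_, ?_⟩
  · intro g hg
    exact ⟨Prod.swap g, hsub ⟨g, hg, rfl⟩, Prod.swap_swap g⟩
  · intro a ha
    obtain ⟨p, hp, hpa⟩ := hA' ha
    exact ⟨Prod.swap p, ⟨p, hp, rfl⟩, hpa⟩
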